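/- Let d ≥ 1, m > 0 and p > 0. Then the moment sum Σ_{x∈ℤ^d} |x|^p G_x(m²) is finite, where G_x(m²) is the massive lattice Green function. (This is the finiteness needed for the correlation length of order p of the non-interacting model to be well-defined for every m > 0.) -/

import Mathlib

set_option maxHeartbeats 1000000

open MeasureTheory

/-- Euclidean norm of a lattice point `x ∈ ℤ^d`. -/
noncomputable def eNormZ {d : ℕ} (x : Fin d → ℤ) : ℝ := Real.sqrt (∑ i, ((x i : ℝ)) ^ 2)

/-- The massive lattice Green function
`G_x(m²) = (2π)^{-d} ∫_{[-π,π]^d} cos(k·x) / (m² + Σᵢ 2(1 - cos kᵢ)) dk`. -/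
noncomputable def latticeGreen (d : ℕ) (m2 : ℝ) (x : Fin d → ℤ) : ℝ :=
  (1 / (2 * Real.pi) ^ d) *
    ∫ k in Set.univ.pi fun _ : Fin d => Set.Icc (-Real.pi) Real.pi,
      Real.cos (∑ i, k i * (x i : ℝ)) / (m2 + ∑ i, 2 * (1 - Real.cos (k i)))

namespace FreeGreenAux

open Real Set

/-- The Brillouin box' `[-π,π]^d`. -/
noncomputable def box' (d : ℕ) : Set (Fin d → ℝ) :=
  Set.univ.pi fun _ : Fin d => Set.Icc (-π) π

lemma box_compact (d : ℕ) : IsCompact (box' d) :=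
  isCompact_univ_pi fun _ => isCompact_Icc

lemma box_meas (d : ℕ) : MeasurableSet (box' d) :=
  MeasurableSet.univ_pi fun _ => measurableSet_Icc

lemma box_volume (d : ℕ) : volume (box' d) = (ENNReal.ofReal (2 * π)) ^ d := by
  rw [box', volume_pi_pi]
  simp only [Real.volume_Icc, sub_neg_eq_add, Finset.prod_const, Finset.card_univ,
    Fintype.card_fin]
  congr 1
  ring_nf

lemma box_volume_lt_top (d : ℕ) : volume (box' d) < ⊤ := by
  rw [box_volume]; exact ENNReal.pow_lt_top ENNReal.ofReal_lt_top

lemma box_volume_toReal (d : ℕ) : (volume (box' d)).toReal = (2 * π) ^ d := by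
  rw [box_volume, ENNReal.toReal_pow, ENNReal.toReal_ofReal (by positivity)]

lemma intOn {d : ℕ} {f : (Fin d → ℝ) → ℝ} (hf : Continuous f) :
    IntegrableOn f (box' d) :=
  hf.continuousOn.integrableOn_compact (box_compact d)

/-- 1D orthogonality. -/
lemma int1d {c : ℤ} (hc : c ≠ 0) :
    ∫ t in Set.Icc (-π) π, Complex.exp (((c : ℂ) * Complex.I) * t) = 0 := by
  have hc' : (c : ℂ) * Complex.I ≠ 0 := by
    simp [Complex.I_ne_zero, hc]
  rw [MeasureTheory.integral_Icc_eq_integral_Ioc,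
    ← intervalIntegral.integral_of_le (by linarith [Real.pi_pos]),
    integral_exp_mul_complex hc']
  have : Complex.exp ((c : ℂ) * Complex.I * π) = Complex.exp ((c : ℂ) * Complex.I * ((-π : ℝ) : ℂ)) := by
    push_cast
    rw [show (c : ℂ) * Complex.I * π = (c : ℂ) * Complex.I * (-π) + (c : ℂ) * (2 * (π : ℂ) * Complex.I)
      by ring, Complex.exp_add, Complex.exp_int_mul_two_pi_mul_I, mul_one]
  rw [show ((π : ℝ) : ℂ) = (π : ℂ) from rfl] at this
  rw [this, sub_self, zero_div]

lemma cont_sum (d : ℕ) (x : Fin d → ℤ) :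
    Continuous fun k : Fin d → ℝ => ∑ i, k i * (x i : ℝ) := by
  exact continuous_finset_sum _ fun i _ => (continuous_apply i).mul continuous_const

lemma base_case {d : ℕ} {x : Fin d → ℤ} (hx : x ≠ 0) :
    ∫ k in box' d, Real.cos (∑ i, k i * (x i : ℝ)) = 0 := by
  set F : (Fin d → ℝ) → ℂ := fun k => ∏ i, Complex.exp (((x i : ℂ) * Complex.I) * (k i)) with hF
  have hFcont : Continuous F := by
    exact continuous_finset_prod _ fun i _ =>
      (Complex.continuous_exp.comp (continuous_const.mul
        (Complex.continuous_ofReal.comp (continuous_apply i))))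
  have hFint : IntegrableOn F (box' d) :=
    hFcont.continuousOn.integrableOn_compact (box_compact d)
  have key : ∫ k in box' d, F k = 0 := by
    rw [← integral_indicator (box_meas d)]
    have hind : (box' d).indicator F =
        fun k => ∏ i, (Set.Icc (-π) π).indicator
          (fun t : ℝ => Complex.exp (((x i : ℂ) * Complex.I) * t)) (k i) := by
      funext k
      by_cases h : k ∈ box' d
      · rw [Set.indicator_of_mem h]
        simp only [box', Set.mem_univ_pi] at h
        exact (Finset.prod_congr rfl fun i _ =>
          Set.indicator_of_mem (h i) (fun t : ℝ => Complex.exp (((x i : ℂ) * Complex.I) * t))).symm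
      · rw [Set.indicator_of_notMem h]
        simp only [box', Set.mem_univ_pi, not_forall] at h
        obtain ⟨i, hi⟩ := h
        exact (Finset.prod_eq_zero (Finset.mem_univ i)
          (Set.indicator_of_notMem hi _)).symm
    rw [hind, volume_pi, MeasureTheory.integral_fintype_prod_eq_prod
      (f := fun i (t : ℝ) => (Set.Icc (-π) π).indicator
        (fun t : ℝ => Complex.exp (((x i : ℂ) * Complex.I) * t)) t)]
    obtain ⟨j, hj⟩ : ∃ j, x j ≠ 0 := by
      by_contra h; push_neg at h; exact hx (funext h)
    refine Finset.prod_eq_zero (Finset.mem_univ j) ?_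
    rw [integral_indicator measurableSet_Icc]
    exact int1d hj
  have hfun : ∀ k : Fin d → ℝ, Real.cos (∑ i, k i * (x i : ℝ)) = RCLike.re (F k) := by
    intro k
    rw [RCLike.re_eq_complex_re, hF]
    show _ = (∏ i, Complex.exp (((x i : ℂ) * Complex.I) * (k i))).re
    rw [← Complex.exp_sum]
    have : ∑ i, ((x i : ℂ) * Complex.I) * (k i)
        = ((∑ i, k i * (x i : ℝ) : ℝ) : ℂ) * Complex.I := by
      push_cast
      rw [Finset.sum_mul]
      exact Finset.sum_congr rfl fun i _ => by ring
    rw [this, Complex.exp_ofReal_mul_I_re]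
  simp only [hfun]
  rw [integral_re hFint, key]
  simp


/-- `S(k) = Σᵢ (2 + 2 cos kᵢ) = 4d - E(k)`. -/
noncomputable def SS (d : ℕ) (k : Fin d → ℝ) : ℝ := ∑ i, (2 + 2 * Real.cos (k i))

lemma cont_SS (d : ℕ) : Continuous (SS d) :=
  continuous_finset_sum _ fun i _ =>
    continuous_const.add (continuous_const.mul (Real.continuous_cos.comp (continuous_apply i)))

lemma cont_integrand (d : ℕ) (x : Fin d → ℤ) (n : ℕ) :
    Continuous fun k : Fin d → ℝ => Real.cos (∑ i, k i * (x i : ℝ)) * (SS d k) ^ n :=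
  (Real.continuous_cos.comp (cont_sum d x)).mul ((cont_SS d).pow n)

lemma sum_update (d : ℕ) (k : Fin d → ℝ) (x : Fin d → ℤ) (i : Fin d) (a : ℤ) :
    ∑ j, k j * ((Function.update x i a j : ℤ) : ℝ)
      = (∑ j, k j * (x j : ℝ)) + k i * (((a - x i : ℤ) : ℝ)) := by
  have h : ∀ j : Fin d, k j * ((Function.update x i a j : ℤ) : ℝ)
      = k j * (x j : ℝ) + (if j = i then k i * (((a - x i : ℤ)) : ℝ) else 0) := by
    intro j
    by_cases hj : j = i
    · subst hj; simp only [Function.update_self, if_pos rfl]; push_cast; ring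
    · simp [Function.update_of_ne hj, hj]
  rw [Finset.sum_congr rfl fun j _ => h j, Finset.sum_add_distrib,
    Finset.sum_ite_eq' Finset.univ i]
  simp

lemma natAbs_sum_update (d : ℕ) (x : Fin d → ℤ) (i : Fin d) (a : ℤ)
    (ha : (x i).natAbs ≤ a.natAbs + 1) :
    ∑ j, (x j).natAbs ≤ (∑ j, (Function.update x i a j).natAbs) + 1 := by
  have h : ∀ j : Fin d, (Function.update x i a j).natAbs
      = Function.update (fun j => (x j).natAbs) i a.natAbs j := by
    intro j
    by_cases hj : j = i
    · subst hj; simp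
    · simp [Function.update_of_ne hj]
  rw [Finset.sum_congr rfl fun j _ => h j, Finset.sum_update_of_mem (Finset.mem_univ i)]
  rw [← Finset.add_sum_erase Finset.univ (fun j => (x j).natAbs) (Finset.mem_univ i), Finset.erase_eq]
  omega

lemma A_vanish (d : ℕ) : ∀ (n : ℕ) (x : Fin d → ℤ), n < ∑ i, (x i).natAbs →
    ∫ k in box' d, Real.cos (∑ i, k i * (x i : ℝ)) * (SS d k) ^ n = 0 := by
  intro n
  induction n with
  | zero =>
    intro x hx
    simp only [pow_zero, mul_one]
    refine base_case fun h => ?_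
    rw [h] at hx; simp at hx
  | succ n ih =>
    intro x hx
    have hpt : ∀ k : Fin d → ℝ, Real.cos (∑ i, k i * (x i : ℝ)) * (SS d k) ^ (n + 1) =
        ∑ i, (2 * (Real.cos (∑ j, k j * (x j : ℝ)) * (SS d k) ^ n)
          + (Real.cos (∑ j, k j * ((Function.update x i (x i + 1) j : ℤ) : ℝ)) * (SS d k) ^ n
          + Real.cos (∑ j, k j * ((Function.update x i (x i - 1) j : ℤ) : ℝ)) * (SS d k) ^ n)) := by
      intro k
      have h1 : ∀ i, (∑ j, k j * ((Function.update x i (x i + 1) j : ℤ) : ℝ))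
          = (∑ j, k j * (x j : ℝ)) + k i := by
        intro i; rw [sum_update]; norm_num
      have h2 : ∀ i, (∑ j, k j * ((Function.update x i (x i - 1) j : ℤ) : ℝ))
          = (∑ j, k j * (x j : ℝ)) - k i := by
        intro i; rw [sum_update]; push_cast; ring
      simp only [h1, h2, Real.cos_add, Real.cos_sub]
      rw [pow_succ]
      nth_rewrite 2 [show SS d k = ∑ i, (2 + 2 * Real.cos (k i)) from rfl]
      rw [← mul_assoc, Finset.mul_sum]
      exact Finset.sum_congr rfl fun i _ => by ring
    calc ∫ k in box' d, Real.cos (∑ i, k i * (x i : ℝ)) * (SS d k) ^ (n + 1)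
        = ∫ k in box' d, ∑ i, (2 * (Real.cos (∑ j, k j * (x j : ℝ)) * (SS d k) ^ n)
          + (Real.cos (∑ j, k j * ((Function.update x i (x i + 1) j : ℤ) : ℝ)) * (SS d k) ^ n
          + Real.cos (∑ j, k j * ((Function.update x i (x i - 1) j : ℤ) : ℝ)) * (SS d k) ^ n)) := by
          exact setIntegral_congr_fun (box_meas d) fun k _ => hpt k
      _ = ∑ i : Fin d, ∫ k in box' d,
            (2 * (Real.cos (∑ j, k j * (x j : ℝ)) * (SS d k) ^ n)
          + (Real.cos (∑ j, k j * ((Function.update x i (x i + 1) j : ℤ) : ℝ)) * (SS d k) ^ n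
          + Real.cos (∑ j, k j * ((Function.update x i (x i - 1) j : ℤ) : ℝ)) * (SS d k) ^ n)) := by
          refine integral_finset_sum _ fun i _ => ?_
          exact intOn ((continuous_const.mul (cont_integrand d x n)).add
            ((cont_integrand d (Function.update x i (x i + 1)) n).add
              (cont_integrand d (Function.update x i (x i - 1)) n)))
      _ = 0 := by
          refine Finset.sum_eq_zero fun i _ => ?_
          rw [integral_add (by exact intOn (continuous_const.mul (cont_integrand d x n)))
              (by exact intOn ((cont_integrand d (Function.update x i (x i + 1)) n).add
                (cont_integrand d (Function.update x i (x i - 1)) n))),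
            integral_add (intOn (cont_integrand d (Function.update x i (x i + 1)) n))
              (intOn (cont_integrand d (Function.update x i (x i - 1)) n)),
            MeasureTheory.integral_const_mul 2]
          rw [ih x (by omega), ih _ ?h1, ih _ ?h2]
          · ring
          case h1 =>
            have := natAbs_sum_update d x i (x i + 1) (by omega)
            omega
          case h2 =>
            have := natAbs_sum_update d x i (x i - 1) (by omega)
            omega

lemma SS_nonneg (d : ℕ) (k : Fin d → ℝ) : 0 ≤ SS d k :=
  Finset.sum_nonneg fun i _ => by nlinarith [Real.neg_one_le_cos (k i)]

lemma SS_le (d : ℕ) (k : Fin d → ℝ) : SS d k ≤ 4 * d := by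
  have : SS d k ≤ ∑ _i : Fin d, (4 : ℝ) :=
    Finset.sum_le_sum fun i _ => by nlinarith [Real.cos_le_one (k i)]
  simpa [Finset.sum_const, Finset.card_univ, mul_comm] using this

lemma E_eq (d : ℕ) (k : Fin d → ℝ) :
    ∑ i, 2 * (1 - Real.cos (k i)) = 4 * d - SS d k := by
  have h : SS d k + ∑ i, 2 * (1 - Real.cos (k i)) = 4 * d := by
    rw [SS, ← Finset.sum_add_distrib]
    rw [Finset.sum_congr rfl fun i _ => (by ring :
      (2 + 2 * Real.cos (k i)) + 2 * (1 - Real.cos (k i)) = (4:ℝ))]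
    simp [Finset.sum_const, Finset.card_univ, mul_comm]
  linarith

lemma A_bound (d : ℕ) (x : Fin d → ℤ) (n : ℕ) :
    |∫ k in box' d, Real.cos (∑ i, k i * (x i : ℝ)) * (SS d k) ^ n|
      ≤ (4 * d) ^ n * (2 * π) ^ d := by
  have h := norm_setIntegral_le_of_norm_le_const (μ := volume) (s := box' d)
    (C := (4 * (d:ℝ)) ^ n) (box_volume_lt_top d)
    (fun k _ => by
      rw [Real.norm_eq_abs, abs_mul]
      calc |Real.cos (∑ i, k i * (x i : ℝ))| * |(SS d k) ^ n|
          ≤ 1 * (4 * (d:ℝ)) ^ n := by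
            apply mul_le_mul (Real.abs_cos_le_one _) ?_ (abs_nonneg _) zero_le_one
            rw [abs_pow, abs_of_nonneg (SS_nonneg d k)]
            exact pow_le_pow_left₀ (SS_nonneg d k) (SS_le d k) n
        _ = (4 * (d:ℝ)) ^ n := one_mul _)
  rw [Real.norm_eq_abs, measureReal_def, box_volume_toReal] at h
  exact h

lemma green_bound (d : ℕ) (m2 : ℝ) (hm2 : 0 < m2) (x : Fin d → ℤ) :
    |latticeGreen d m2 x|
      ≤ (1 / m2) * (4 * d / (m2 + 4 * d)) ^ (∑ i, (x i).natAbs) := by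
  set Q : ℝ := m2 + 4 * d with hQdef
  have hQ : 0 < Q := by positivity
  set r : ℝ := 4 * d / Q with hrdef
  have hr0 : 0 ≤ r := by positivity
  have hr1 : r < 1 := by
    rw [hrdef, div_lt_one hQ]; linarith
  set L : ℕ := ∑ i, (x i).natAbs with hL
  set F : ℕ → (Fin d → ℝ) → ℝ :=
    fun n k => (Real.cos (∑ i, k i * (x i : ℝ)) * (SS d k) ^ n) * (1 / Q) ^ (n + 1) with hFdef
  -- pointwise geometric expansion
  have hpt : ∀ k : Fin d → ℝ,
      Real.cos (∑ i, k i * (x i : ℝ)) / (m2 + ∑ i, 2 * (1 - Real.cos (k i)))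
        = ∑' n, F n k := by
    intro k
    have hS0 := SS_nonneg d k
    have hSle := SS_le d k
    have hq1 : SS d k / Q < 1 := by rw [div_lt_one hQ]; linarith
    have hq0 : 0 ≤ SS d k / Q := by positivity
    have h1 : ∀ n : ℕ, F n k
        = (Real.cos (∑ i, k i * (x i : ℝ)) * (1 / Q)) * (SS d k / Q) ^ n := by
      intro n
      simp only [hFdef]
      rw [pow_succ, div_pow]
      ring
    rw [tsum_congr h1, tsum_mul_left, tsum_geometric_of_lt_one hq0 hq1]
    rw [E_eq]
    have hQS : 0 < Q - SS d k := by rw [hQdef]; linarith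
    have h2 : m2 + (4 * d - SS d k) = Q - SS d k := by rw [hQdef]; ring
    rw [h2]
    rw [show (1 : ℝ) - SS d k / Q = (Q - SS d k) / Q by field_simp]
    field_simp
  have hFint : ∀ n, IntegrableOn (F n) (box' d) :=
    fun n => intOn ((cont_integrand d x n).mul continuous_const)
  have hnorm : ∀ n, (∫ k in box' d, ‖F n k‖) ≤ ((2 * π) ^ d / Q) * r ^ n := by
    intro n
    have hb : ∀ k ∈ box' d, ‖F n k‖ ≤ (4 * (d:ℝ)) ^ n * (1 / Q) ^ (n + 1) := by
      intro k _
      rw [hFdef, Real.norm_eq_abs, abs_mul, abs_mul]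
      have h1 : |Real.cos (∑ i, k i * (x i : ℝ))| ≤ 1 := Real.abs_cos_le_one _
      have h2 : |(SS d k) ^ n| ≤ (4 * (d:ℝ)) ^ n := by
        rw [abs_pow, abs_of_nonneg (SS_nonneg d k)]
        exact pow_le_pow_left₀ (SS_nonneg d k) (SS_le d k) n
      have h3 : |(1 / Q) ^ (n+1)| = (1 / Q) ^ (n+1) := abs_of_nonneg (by positivity)
      rw [h3]
      have : |Real.cos (∑ i, k i * (x i : ℝ))| * |(SS d k) ^ n| ≤ (4 * (d:ℝ)) ^ n := by
        calc |Real.cos (∑ i, k i * (x i : ℝ))| * |(SS d k) ^ n| ≤ 1 * (4 * (d:ℝ)) ^ n :=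
          mul_le_mul h1 h2 (abs_nonneg _) zero_le_one
        _ = _ := one_mul _
      exact mul_le_mul_of_nonneg_right this (by positivity)
    calc (∫ k in box' d, ‖F n k‖)
        ≤ ∫ _k in box' d, (4 * (d:ℝ)) ^ n * (1 / Q) ^ (n + 1) := by
          refine setIntegral_mono_on (hFint n).norm (integrableOn_const ?_) (box_meas d) hb
          exact (box_volume_lt_top d).ne
      _ = ((2 * π) ^ d) * ((4 * (d:ℝ)) ^ n * (1 / Q) ^ (n + 1)) := by
          rw [setIntegral_const, measureReal_def, box_volume_toReal]; rw [smul_eq_mul]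
      _ = ((2 * π) ^ d / Q) * r ^ n := by
          have h1Q : ((1:ℝ)/Q) ^ (n+1) = (1/Q^n) * (1/Q) := by
            rw [pow_succ, div_pow, one_pow]
          rw [hrdef, h1Q, div_pow]
          ring
  have hbsum : Summable (fun n => ((2 * π) ^ d / Q) * r ^ n) :=
    (summable_geometric_of_lt_one hr0 hr1).mul_left _
  have hsumnorm : Summable (fun n => ∫ k in box' d, ‖F n k‖) :=
    Summable.of_nonneg_of_le (fun n => integral_nonneg fun k => norm_nonneg _) hnorm hbsum
  have hswap := integral_tsum_of_summable_integral_norm (fun n => hFint n) hsumnorm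
  have hmain : ∫ k in box' d,
      Real.cos (∑ i, k i * (x i : ℝ)) / (m2 + ∑ i, 2 * (1 - Real.cos (k i)))
        = ∑' n, ∫ k in box' d, F n k := by
    rw [hswap]
    exact setIntegral_congr_fun (box_meas d) fun k _ => hpt k
  set c : ℕ → ℝ := fun n => ∫ k in box' d, F n k with hcdef
  have hcval : ∀ n, c n
      = (∫ k in box' d, Real.cos (∑ i, k i * (x i : ℝ)) * (SS d k) ^ n) * (1 / Q) ^ (n + 1) := by
    intro n; rw [hcdef]; simp only [hFdef]; exact integral_mul_const _ _
  clear_value L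
  clear_value c
  have hcabs : ∀ n, |c n| ≤ ((2 * π) ^ d / Q) * r ^ n := by
    intro n
    calc |c n| ≤ ∫ k in box' d, ‖F n k‖ := by
          rw [hcdef, ← Real.norm_eq_abs]; exact norm_integral_le_integral_norm _
      _ ≤ _ := hnorm n
  have hcabs_sum : Summable (fun n => |c n|) :=
    Summable.of_nonneg_of_le (fun n => abs_nonneg _) hcabs hbsum
  have hcsum : Summable c := summable_abs_iff.mp hcabs_sum
  have hvanish : ∀ n < L, c n = 0 := by
    intro n hn
    rw [hL] at hn
    rw [hcval n, A_vanish d n x hn, zero_mul]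
  -- tail estimate
  have htail : |∑' n, c n| ≤ ((2 * π) ^ d / m2) * r ^ L := by
    have hsplit := Summable.sum_add_tsum_nat_add L hcsum
    have hzero : ∑ n ∈ Finset.range L, c n = 0 :=
      Finset.sum_eq_zero fun n hn => hvanish n (Finset.mem_range.mp hn)
    rw [← hsplit, hzero, zero_add]
    have hshiftsum : Summable (fun n => |c (n + L)|) := (summable_nat_add_iff L).mpr hcabs_sum
    have hbsum' : Summable (fun n : ℕ => ((2 * π) ^ d / Q) * r ^ (n + L)) :=
      (summable_nat_add_iff L).mpr hbsum
    calc |∑' n, c (n + L)| ≤ ∑' n, |c (n + L)| := by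
          rw [← Real.norm_eq_abs]
          exact norm_tsum_le_tsum_norm hshiftsum
      _ ≤ ∑' n : ℕ, ((2 * π) ^ d / Q) * r ^ (n + L) :=
          Summable.tsum_le_tsum (fun n => hcabs (n + L)) hshiftsum hbsum'
      _ = ((2 * π) ^ d / m2) * r ^ L := by
          have : ∀ n : ℕ, ((2 * π) ^ d / Q) * r ^ (n + L)
              = (((2 * π) ^ d / Q) * r ^ L) * r ^ n := by
            intro n; rw [pow_add]; ring
          rw [tsum_congr this, tsum_mul_left, tsum_geometric_of_lt_one hr0 hr1]
          have h1r : (1 : ℝ) - r = m2 / Q := by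
            rw [hrdef]; field_simp; rw [hQdef]; ring
          rw [h1r]
          have hm2' : m2 ≠ 0 := ne_of_gt hm2
          field_simp
  -- conclude
  have hpi : (0:ℝ) < (2 * π) ^ d := by positivity
  rw [latticeGreen]
  rw [abs_mul, abs_of_nonneg (by positivity : (0:ℝ) ≤ 1 / (2 * π) ^ d)]
  have : |∫ k in Set.univ.pi fun _ : Fin d => Set.Icc (-Real.pi) Real.pi,
      Real.cos (∑ i, k i * (x i : ℝ)) / (m2 + ∑ i, 2 * (1 - Real.cos (k i)))|
      ≤ ((2 * π) ^ d / m2) * r ^ L := by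
    rw [show (Set.univ.pi fun _ : Fin d => Set.Icc (-Real.pi) Real.pi) = box' d from rfl]
    rw [hmain]
    exact htail
  calc (1 / (2 * π) ^ d) * |∫ k in Set.univ.pi fun _ : Fin d => Set.Icc (-Real.pi) Real.pi,
        Real.cos (∑ i, k i * (x i : ℝ)) / (m2 + ∑ i, 2 * (1 - Real.cos (k i)))|
      ≤ (1 / (2 * π) ^ d) * (((2 * π) ^ d / m2) * r ^ L) :=
        mul_le_mul_of_nonneg_left this (by positivity)
    _ = (1 / m2) * r ^ L := by field_simp

lemma sum_le_prod_one_add {ι : Type*} [DecidableEq ι] (s : Finset ι) (a : ι → ℕ) :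
    ∑ i ∈ s, a i ≤ ∏ i ∈ s, (1 + a i) := by
  induction s using Finset.induction with
  | empty => simp
  | @insert j s hj ih =>
    rw [Finset.sum_insert hj, Finset.prod_insert hj]
    have h1 : 1 ≤ ∏ i ∈ s, (1 + a i) :=
      Finset.one_le_prod' fun i _ => Nat.le_add_right 1 _
    calc a j + ∑ i ∈ s, a i ≤ a j * ∏ i ∈ s, (1 + a i) + ∏ i ∈ s, (1 + a i) := by
          have := Nat.le_mul_of_pos_right (a j) (by omega : 0 < ∏ i ∈ s, (1 + a i))
          omega
      _ = (1 + a j) * ∏ i ∈ s, (1 + a i) := by ring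

lemma eNormZ_le {d : ℕ} (x : Fin d → ℤ) :
    eNormZ x ≤ ((∑ i, (x i).natAbs : ℕ) : ℝ) := by
  rw [eNormZ]
  have habs : ∀ i : Fin d, ((x i : ℝ)) ^ 2 = |(x i : ℝ)| ^ 2 := fun i => (sq_abs _).symm
  have h1 : (∑ i, ((x i : ℝ)) ^ 2) ≤ (∑ i, |(x i : ℝ)|) ^ 2 := by
    rw [Finset.sum_congr rfl fun i _ => habs i]
    exact Finset.sum_sq_le_sq_sum_of_nonneg fun i _ => abs_nonneg _
  have h2 : Real.sqrt ((∑ i, |(x i : ℝ)|) ^ 2) = ∑ i, |(x i : ℝ)| :=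
    Real.sqrt_sq (Finset.sum_nonneg fun i _ => abs_nonneg _)
  have h3 : (∑ i, |(x i : ℝ)|) = ((∑ i, (x i).natAbs : ℕ) : ℝ) := by
    push_cast
    exact Finset.sum_congr rfl fun i _ => by rw [Nat.cast_natAbs]; push_cast; rfl
  calc Real.sqrt (∑ i, ((x i : ℝ)) ^ 2) ≤ Real.sqrt ((∑ i, |(x i : ℝ)|) ^ 2) :=
        Real.sqrt_le_sqrt h1
    _ = _ := by rw [h2, h3]

lemma summable_g {r : ℝ} (hr0 : 0 < r) (hr1 : r < 1) (K : ℕ) :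
    Summable (fun z : ℤ => (1 + (z.natAbs : ℝ)) ^ K * r ^ z.natAbs) := by
  have hnat : Summable (fun n : ℕ => (1 + (n : ℝ)) ^ K * r ^ n) := by
    have h0 : Summable (fun n : ℕ => (n : ℝ) ^ K * r ^ n) :=
      summable_pow_mul_geometric_of_norm_lt_one K
        (by rw [Real.norm_eq_abs, abs_of_pos hr0]; exact hr1)
    have h1 : Summable (fun n : ℕ => ((n + 1 : ℕ) : ℝ) ^ K * r ^ (n + 1)) :=
      (summable_nat_add_iff 1).mpr h0
    refine (h1.mul_left r⁻¹).congr fun n => ?_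
    push_cast
    rw [pow_succ]
    field_simp
    ring
  apply Summable.of_nat_of_neg
  · simpa using hnat
  · simpa using hnat

lemma prod_summable {g : ℤ → ℝ} (hg : Summable g) (h0 : ∀ z, 0 ≤ g z) :
    ∀ n : ℕ, Summable (fun x : Fin n → ℤ => ∏ i, g (x i)) := by
  intro n
  induction n with
  | zero => exact Summable.of_finite
  | succ n ih =>
    refine ((Fin.consEquiv (fun _ : Fin (n+1) => ℤ)).summable_iff
      (f := fun x : Fin (n+1) → ℤ => ∏ i, g (x i))).mp ?_
    have hsum : Summable (fun q : ℤ × (Fin n → ℤ) => g q.1 * ∏ i, g (q.2 i)) :=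
      Summable.mul_of_nonneg (f := g) (g := fun y : Fin n → ℤ => ∏ i, g (y i))
        hg ih (fun z => h0 z) (fun y => Finset.prod_nonneg fun i _ => h0 _)
    refine hsum.congr fun q => ?_
    show g q.1 * ∏ i, g (q.2 i) = ∏ i, g ((Fin.cons q.1 q.2 : Fin (n+1) → ℤ) i)
    rw [Fin.prod_univ_succ, Fin.cons_zero]
    congr 1

end FreeGreenAux

open FreeGreenAux in
/-- For every `d ≥ 1`, `m > 0`, `p > 0`, the moment sum `Σ_{x∈ℤ^d} |x|^p G_x(m²)`
is finite (summable). -/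
theorem free_green_moment_summable (d : ℕ) (hd : 1 ≤ d) (m : ℝ) (hm : 0 < m)
    (p : ℝ) (hp : 0 < p) :
    Summable (fun x : Fin d → ℤ => eNormZ x ^ p * latticeGreen d (m ^ 2) x) := by
  have hm2 : (0:ℝ) < m ^ 2 := by positivity
  set M : ℝ := m ^ 2 with hM
  set Q : ℝ := M + 4 * d with hQdef
  have hQ : 0 < Q := by positivity
  set r : ℝ := 4 * d / Q with hrdef
  have hd' : (0:ℝ) < 4 * d := by
    have : (1:ℝ) ≤ d := by exact_mod_cast hd
    linarith
  have hr0 : 0 < r := by positivity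
  have hr1 : r < 1 := by rw [hrdef, div_lt_one hQ]; linarith
  set K : ℕ := ⌈p⌉₊ with hK
  set g : ℤ → ℝ := fun z => (1 + (z.natAbs : ℝ)) ^ K * r ^ z.natAbs with hg
  have hg0 : ∀ z, 0 ≤ g z := fun z => by rw [hg]; positivity
  have hgsum : Summable g := summable_g hr0 hr1 K
  have hprod : Summable (fun x : Fin d → ℤ => ∏ i, g (x i)) :=
    prod_summable hgsum hg0 d
  have hb : ∀ x : Fin d → ℤ,
      |eNormZ x ^ p * latticeGreen d M x| ≤ (1 / M) * ∏ i, g (x i) := by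
    intro x
    set L : ℕ := ∑ i, (x i).natAbs with hL
    have hG := green_bound d M hm2 x
    rw [← hQdef, ← hrdef, ← hL] at hG
    have hEnn : 0 ≤ eNormZ x := Real.sqrt_nonneg _
    have hEp : 0 ≤ eNormZ x ^ p := Real.rpow_nonneg hEnn p
    set P : ℝ := ∏ i, (1 + ((x i).natAbs : ℝ)) with hP
    have hP1 : 1 ≤ P := by
      rw [hP]
      have := Finset.prod_le_prod (s := Finset.univ)
        (f := fun _ : Fin d => (1:ℝ)) (g := fun i => 1 + ((x i).natAbs : ℝ))
        (fun i _ => zero_le_one)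
        (fun i _ => le_add_of_nonneg_right (by positivity))
      simpa using this
    have hLP : (L : ℝ) ≤ P := by
      have := sum_le_prod_one_add (Finset.univ : Finset (Fin d)) (fun i => (x i).natAbs)
      rw [hL, hP]
      push_cast
      exact_mod_cast this
    have hep : eNormZ x ^ p ≤ P ^ K := by
      calc eNormZ x ^ p ≤ P ^ p :=
            Real.rpow_le_rpow hEnn ((eNormZ_le x).trans hLP) hp.le
        _ ≤ P ^ (K : ℝ) :=
            Real.rpow_le_rpow_of_exponent_le hP1 (Nat.le_ceil p)
        _ = P ^ K := Real.rpow_natCast P K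
    have hPK : P ^ K = ∏ i, (1 + ((x i).natAbs : ℝ)) ^ K := by
      rw [hP, ← Finset.prod_pow]
    have hrL : r ^ L = ∏ i, r ^ (x i).natAbs := by
      rw [hL, ← Finset.prod_pow_eq_pow_sum]
    calc |eNormZ x ^ p * latticeGreen d M x|
        = eNormZ x ^ p * |latticeGreen d M x| := by
          rw [abs_mul, abs_of_nonneg hEp]
      _ ≤ (P ^ K) * ((1 / M) * r ^ L) :=
          mul_le_mul hep hG (abs_nonneg _) (by positivity)
      _ = (1 / M) * ((∏ i, (1 + ((x i).natAbs : ℝ)) ^ K) * ∏ i, r ^ (x i).natAbs) := by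
          rw [hPK, hrL]; ring
      _ = (1 / M) * ∏ i, g (x i) := by
          simp only [hg]
          rw [← Finset.prod_mul_distrib]
  have habs : Summable (fun x : Fin d → ℤ => |eNormZ x ^ p * latticeGreen d M x|) :=
    Summable.of_nonneg_of_le (fun _ => abs_nonneg _) hb (hprod.mul_left (1 / M))
  exact summable_abs_iff.mp habs
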